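/- Suppose for each c in an open interval the quantities Q(c) > 0 and H(c) satisfy H'(c) + c Q'(c) = 0 and H(c) = -E(c)T - ((p+4)/(4(p+1)(p+2))) I(c), cQ(c) = E(c)T + ((3p+4)/(4(p+1)(p+2))) I(c), where E is differentiable with E'(c) > 0, T > 0, and I is differentiable. Then I'(c) = (2(p+1)(p+2)/p) Q(c) > 0 and c Q'(c) = T E'(c) + ((p+4)/(2p)) Q(c) > 0; in particular Q is strictly increasing. -/

import Mathlib

open Set

/-- Suppose on an interval `(a,b) ⊂ (0,∞)` of speeds the quantities `Q > 0` and `H`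
satisfy `H' + cQ' = 0`, `H = -ET - ((p+4)/(4(p+1)(p+2)))I` and
`cQ = ET + ((3p+4)/(4(p+1)(p+2)))I`, with `E' > 0` and `T > 0`. Then
`I' = (2(p+1)(p+2)/p)Q > 0` and `cQ' = TE' + ((p+4)/(2p))Q > 0`; in particular `Q`
is strictly increasing. -/
theorem Q_strictMono (T : ℝ) (hT : 0 < T) (p : ℕ) (hp : 1 ≤ p)
    (a b : ℝ) (ha : 0 < a) (hab : a < b)
    (E Q Hf I E' Q' H' I' : ℝ → ℝ)
    (hE : ∀ c ∈ Set.Ioo a b, HasDerivAt E (E' c) c)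
    (hQ : ∀ c ∈ Set.Ioo a b, HasDerivAt Q (Q' c) c)
    (hH : ∀ c ∈ Set.Ioo a b, HasDerivAt Hf (H' c) c)
    (hI : ∀ c ∈ Set.Ioo a b, HasDerivAt I (I' c) c)
    (hQpos : ∀ c ∈ Set.Ioo a b, 0 < Q c)
    (hE'pos : ∀ c ∈ Set.Ioo a b, 0 < E' c)
    (hid1 : ∀ c ∈ Set.Ioo a b, H' c + c * Q' c = 0)
    (hid2 : ∀ c ∈ Set.Ioo a b, Hf c = -(E c) * T
      - (((p : ℝ) + 4) / (4 * ((p : ℝ) + 1) * ((p : ℝ) + 2))) * I c)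
    (hid3 : ∀ c ∈ Set.Ioo a b, c * Q c = E c * T
      + ((3 * (p : ℝ) + 4) / (4 * ((p : ℝ) + 1) * ((p : ℝ) + 2))) * I c) :
    (∀ c ∈ Set.Ioo a b,
      I' c = (2 * ((p : ℝ) + 1) * ((p : ℝ) + 2) / (p : ℝ)) * Q c ∧ 0 < I' c) ∧
    (∀ c ∈ Set.Ioo a b,
      c * Q' c = T * E' c + (((p : ℝ) + 4) / (2 * (p : ℝ))) * Q c ∧ 0 < c * Q' c) ∧
    StrictMonoOn Q (Set.Ioo a b) := by
  have hppos : (0:ℝ) < (p:ℝ) := by exact_mod_cast hp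
  set k2 : ℝ := ((p : ℝ) + 4) / (4 * ((p : ℝ) + 1) * ((p : ℝ) + 2)) with hk2
  set k3 : ℝ := (3 * (p : ℝ) + 4) / (4 * ((p : ℝ) + 1) * ((p : ℝ) + 2)) with hk3
  -- derivative of identity hid2
  have key2 : ∀ c ∈ Set.Ioo a b, H' c = -(E' c) * T - k2 * I' c := by
    intro c hc
    have hmem : Set.Ioo a b ∈ nhds c := isOpen_Ioo.mem_nhds hc
    have hd : HasDerivAt (fun x => -(E x) * T - k2 * I x)
        (-(E' c) * T - k2 * I' c) c := by
      exact (((hE c hc).neg).mul_const T).sub ((hI c hc).const_mul k2)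
    have heq : Hf =ᶠ[nhds c] (fun x => -(E x) * T - k2 * I x) :=
      Filter.eventuallyEq_of_mem hmem (fun x hx => hid2 x hx)
    exact (hH c hc).unique (hd.congr_of_eventuallyEq heq)
  have key3 : ∀ c ∈ Set.Ioo a b, Q c + c * Q' c = E' c * T + k3 * I' c := by
    intro c hc
    have hmem : Set.Ioo a b ∈ nhds c := isOpen_Ioo.mem_nhds hc
    have hd1 : HasDerivAt (fun x => x * Q x) (Q c + c * Q' c) c := by
      have : HasDerivAt (fun x => x * Q x) (1 * Q c + c * Q' c) c := (hasDerivAt_id' c).mul (hQ c hc)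
      simpa [add_comm] using this
    have hd2 : HasDerivAt (fun x => E x * T + k3 * I x)
        (E' c * T + k3 * I' c) c :=
      ((hE c hc).mul_const T).add ((hI c hc).const_mul k3)
    have heq : (fun x => x * Q x) =ᶠ[nhds c] (fun x => E x * T + k3 * I x) :=
      Filter.eventuallyEq_of_mem hmem (fun x hx => hid3 x hx)
    exact hd1.unique (hd2.congr_of_eventuallyEq heq)
  have hden : 4 * ((p : ℝ) + 1) * ((p : ℝ) + 2) ≠ 0 := by positivity
  have hIeq : ∀ c ∈ Set.Ioo a b,
      I' c = (2 * ((p : ℝ) + 1) * ((p : ℝ) + 2) / (p : ℝ)) * Q c := by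
    intro c hc
    have h1 := hid1 c hc
    have h2 := key2 c hc
    have h3 := key3 c hc
    -- c*Q' = E'*T + k2*I', so Q = (k3-k2)*I'
    have hQc : Q c = (k3 - k2) * I' c := by
      have : c * Q' c = E' c * T + k2 * I' c := by linarith
      linarith [h3]
    rw [hk3, hk2] at hQc
    field_simp at hQc ⊢
    nlinarith [hQc, hppos]
  have hQ'eq : ∀ c ∈ Set.Ioo a b,
      c * Q' c = T * E' c + (((p : ℝ) + 4) / (2 * (p : ℝ))) * Q c := by
    intro c hc
    have h1 := hid1 c hc
    have h2 := key2 c hc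
    have hIc := hIeq c hc
    have : c * Q' c = E' c * T + k2 * I' c := by linarith
    rw [this, hIc, hk2]
    field_simp
    ring
  refine ⟨fun c hc => ⟨hIeq c hc, ?_⟩, fun c hc => ⟨hQ'eq c hc, ?_⟩, ?_⟩
  · rw [hIeq c hc]
    have := hQpos c hc
    positivity
  · rw [hQ'eq c hc]
    have h1 := hE'pos c hc
    have h2 := hQpos c hc
    positivity
  · have hQ'pos : ∀ c ∈ Set.Ioo a b, 0 < Q' c := by
      intro c hc
      have hcpos : 0 < c := lt_trans ha hc.1
      have : 0 < c * Q' c := by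
        rw [hQ'eq c hc]
        have h1 := hE'pos c hc
        have h2 := hQpos c hc
        positivity
      nlinarith [this, hcpos]
    have hcont : ContinuousOn Q (Set.Ioo a b) :=
      fun c hc => ((hQ c hc).continuousAt).continuousWithinAt
    apply strictMonoOn_of_deriv_pos (convex_Ioo a b) hcont
    intro c hc
    rw [interior_Ioo] at hc
    rw [(hQ c hc).deriv]
    exact hQ'pos c hc
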